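/- Let r, s be positive integers with r ≤ s + 1, let k ≥ 1 be an integer, let u, z ∈ ℂ with |u| ≤ 1 and |z| < 1, let a_1, …, a_r ∈ ℂ, and let c_1, …, c_s ∈ ℂ with c_1 ≠ 0 and 1 - c_i q^j ≠ 0 for all 1 ≤ i ≤ s and all j ≥ 0. Then the k-th q-derivative with respect to c_1 of the function c_1 ↦ rΦs(a_1,…,a_r; c_1, c_2,…,c_s; q, u, z) equals ((-1)^{1+s-r} ∏_{i=1}^{r}(1-a_i) · (q;q)_k · z) / ((c_1;q)_{k+1} (1-q) ∏_{i=2}^{s}(1-c_i)) times the deformed series (r+1)Φ(s+1)(a_1 q, …, a_r q, q^{k+1}; c_1 q^{k+1}, c_2 q, …, c_s q, q^2; q, u, q^{1+s-r} u z). -/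

import Mathlib

/-- The finite q-shifted factorial (a;q)_n = ∏_{j=0}^{n-1} (1 - a q^j). -/
noncomputable def qPoch (q a : ℂ) (n : ℕ) : ℂ :=
  ∏ j ∈ Finset.range n, (1 - a * q ^ j)

/-- The q-differential operator: (D_q f)(x) = (f(x) - f(qx))/x. -/
noncomputable def Dq (q : ℂ) (f : ℂ → ℂ) : ℂ → ℂ :=
  fun x => (f x - f (q * x)) / x

/-- The deformed basic hypergeometric series
rΦs(a₁,…,a_r; b₁,…,b_s; q, u, z)
  = ∑_{n≥0} u^{C(n,2)} (∏ᵢ (aᵢ;q)_n) / ((q;q)_n ∏ᵢ (bᵢ;q)_n)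
      ((-1)^n q^{C(n,2)})^{1+s-r} z^n. -/
noncomputable def dPhi (q u z : ℂ) {r s : ℕ} (a : Fin r → ℂ) (b : Fin s → ℂ) : ℂ :=
  ∑' n : ℕ,
    u ^ (n.choose 2) * (∏ i, qPoch q (a i) n) / (qPoch q q n * ∏ i, qPoch q (b i) n) *
      ((-1) ^ n * q ^ (n.choose 2)) ^ (1 + s - r) * z ^ n


lemma qPoch_zero (q a : ℂ) : qPoch q a 0 = 1 := by simp [qPoch]

lemma qPoch_succ (q a : ℂ) (n : ℕ) : qPoch q a (n+1) = qPoch q a n * (1 - a * q ^ n) := by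
  simp [qPoch, Finset.prod_range_succ]

lemma qPoch_succ' (q a : ℂ) (n : ℕ) : qPoch q a (n+1) = (1 - a) * qPoch q (a*q) n := by
  rw [qPoch, Finset.prod_range_succ', qPoch]
  simp only [pow_zero, mul_one]
  rw [mul_comm]
  congr 1
  apply Finset.prod_congr rfl
  intro j _
  ring_nf

lemma qPoch_add (q a : ℂ) (m n : ℕ) :
    qPoch q a (m+n) = qPoch q a m * qPoch q (a * q ^ m) n := by
  rw [qPoch, Finset.prod_range_add]
  congr 1
  apply Finset.prod_congr rfl
  intro j _
  rw [pow_add]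
  ring

lemma qPoch_one_eq_zero (q : ℂ) {k : ℕ} (hk : 1 ≤ k) : qPoch q 1 k = 0 := by
  obtain ⟨m, rfl⟩ := Nat.exists_eq_add_of_le hk
  rw [add_comm, qPoch_succ']
  simp

lemma qPoch_ne_zero {q a : ℂ} (h : ∀ j : ℕ, 1 - a * q ^ j ≠ 0) (n : ℕ) : qPoch q a n ≠ 0 :=
  Finset.prod_ne_zero_iff.2 fun j _ => h j

lemma geom_partial_le {r : ℝ} (h0 : 0 ≤ r) (h1 : r < 1) (n : ℕ) :
    ∑ j ∈ Finset.range n, r ^ j ≤ (1 - r)⁻¹ := by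
  have h := Summable.sum_le_tsum (Finset.range n) (fun i _ => pow_nonneg h0 i)
    (summable_geometric_of_lt_one h0 h1)
  rwa [tsum_geometric_of_lt_one h0 h1] at h

lemma qPoch_norm_le {q : ℂ} (hq1 : ‖q‖ < 1) (a : ℂ) (n : ℕ) :
    ‖qPoch q a n‖ ≤ Real.exp (‖a‖ * (1 - ‖q‖)⁻¹) := by
  rw [qPoch, norm_prod]
  have h1 : ∀ j ∈ Finset.range n,
      ‖1 - a * q ^ j‖ ≤ Real.exp (‖a‖ * ‖q‖ ^ j) := by
    intro j _
    have h2 : ‖1 - a * q ^ j‖ ≤ 1 + ‖a‖ * ‖q‖ ^ j := by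
      have := norm_sub_le (1 : ℂ) (a * q ^ j)
      simpa [norm_mul, norm_pow] using this
    have h3 := Real.add_one_le_exp (‖a‖ * ‖q‖ ^ j)
    linarith
  calc (∏ j ∈ Finset.range n, ‖1 - a * q ^ j‖)
      ≤ ∏ j ∈ Finset.range n, Real.exp (‖a‖ * ‖q‖ ^ j) :=
        Finset.prod_le_prod (fun j _ => norm_nonneg _) h1
    _ = Real.exp (∑ j ∈ Finset.range n, ‖a‖ * ‖q‖ ^ j) :=
        (Real.exp_sum _ _).symm
    _ ≤ Real.exp (‖a‖ * (1 - ‖q‖)⁻¹) := by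
        apply Real.exp_le_exp.2
        rw [← Finset.mul_sum]
        exact mul_le_mul_of_nonneg_left (geom_partial_le (norm_nonneg _) hq1 n)
          (norm_nonneg _)

lemma one_sub_sum_le_prod (t : ℕ → ℝ) (h0 : ∀ j, 0 ≤ t j) (h1 : ∀ j, t j ≤ 1) (n : ℕ) :
    1 - ∑ j ∈ Finset.range n, t j ≤ ∏ j ∈ Finset.range n, (1 - t j) := by
  induction n with
  | zero => simp
  | succ n ih =>
    rw [Finset.sum_range_succ, Finset.prod_range_succ]
    have hp : 0 ≤ ∏ j ∈ Finset.range n, (1 - t j) :=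
      Finset.prod_nonneg (fun j _ => by linarith [h1 j])
    have hsum : 0 ≤ ∑ j ∈ Finset.range n, t j := Finset.sum_nonneg (fun j _ => h0 j)
    nlinarith [h0 n, h1 n]

lemma qPoch_lower {q a : ℂ} (hq0 : 0 < ‖q‖) (hq1 : ‖q‖ < 1)
    (h : ∀ j : ℕ, 1 - a * q ^ j ≠ 0) :
    ∃ δ : ℝ, 0 < δ ∧ ∀ n, δ ≤ ‖qPoch q a n‖ := by
  have hq1' : 0 < 1 - ‖q‖ := by linarith
  obtain ⟨M, hM⟩ : ∃ M : ℕ, ‖a‖ * ‖q‖ ^ M ≤ (1 - ‖q‖) / 2 := by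
    obtain ⟨M, hM⟩ := exists_pow_lt_of_lt_one
      (x := (1 - ‖q‖) / 2 / (‖a‖ + 1)) (by positivity) hq1
    refine ⟨M, ?_⟩
    have ha : 0 ≤ ‖a‖ := norm_nonneg _
    have hqM : 0 ≤ ‖q‖ ^ M := by positivity
    have key : (‖a‖ + 1) * ((1 - ‖q‖)/2/(‖a‖ + 1))
        = (1 - ‖q‖)/2 := by field_simp
    nlinarith [mul_le_mul_of_nonneg_left hM.le
      (show (0:ℝ) ≤ ‖a‖ + 1 by positivity)]
  have hpos : ∀ n, 0 < ‖qPoch q a n‖ :=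
    fun n => norm_pos_iff.mpr (qPoch_ne_zero h n)
  set δ0 := (Finset.range (M+1)).inf' (by simp) (fun N => ‖qPoch q a N‖) with hδ0
  have hδ0pos : 0 < δ0 := by
    rw [hδ0, Finset.lt_inf'_iff]
    exact fun N _ => hpos N
  refine ⟨δ0/2, by positivity, ?_⟩
  intro n
  rcases le_or_gt n M with hn | hn
  · have : δ0 ≤ ‖qPoch q a n‖ :=
      Finset.inf'_le _ (by simp only [Finset.mem_range]; omega)
    linarith
  · obtain ⟨d, rfl⟩ : ∃ d, n = M + d := ⟨n - M, by omega⟩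
    rw [qPoch_add, norm_mul]
    have h1 : δ0 ≤ ‖qPoch q a M‖ :=
      Finset.inf'_le _ (by simp)
    have ht0 : ∀ j : ℕ, (0:ℝ) ≤ ‖a‖ * ‖q‖ ^ M * ‖q‖ ^ j := by
      intro j; positivity
    have ht1 : ∀ j : ℕ, ‖a‖ * ‖q‖ ^ M * ‖q‖ ^ j ≤ 1 := by
      intro j
      have hj : ‖q‖ ^ j ≤ 1 := pow_le_one₀ (norm_nonneg _) hq1.le
      nlinarith [ht0 j, hM, hq1', hj, mul_nonneg (norm_nonneg a) (pow_nonneg (norm_nonneg q) M)]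
    have h2 : (1:ℝ)/2 ≤ ‖qPoch q (a * q ^ M) d‖ := by
      rw [qPoch, norm_prod]
      have step1 : ∀ j ∈ Finset.range d,
          1 - ‖a‖ * ‖q‖ ^ M * ‖q‖ ^ j
            ≤ ‖1 - a * q ^ M * q ^ j‖ := by
        intro j _
        have := norm_sub_norm_le (1 : ℂ) (a * q ^ M * q ^ j)
        simpa [norm_mul, norm_pow] using this
      have step2 : 1 - ∑ j ∈ Finset.range d,
          ‖a‖ * ‖q‖ ^ M * ‖q‖ ^ j
            ≤ ∏ j ∈ Finset.range d, (1 - ‖a‖ * ‖q‖ ^ M * ‖q‖ ^ j) :=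
        one_sub_sum_le_prod _ ht0 ht1 d
      have step3 : ∑ j ∈ Finset.range d,
          ‖a‖ * ‖q‖ ^ M * ‖q‖ ^ j ≤ 1/2 := by
        rw [← Finset.mul_sum]
        calc ‖a‖ * ‖q‖ ^ M * (∑ j ∈ Finset.range d, ‖q‖ ^ j)
            ≤ ((1 - ‖q‖)/2) * (1 - ‖q‖)⁻¹ := by
              apply mul_le_mul hM (geom_partial_le (norm_nonneg _) hq1 d)
                (Finset.sum_nonneg (fun j _ => by positivity))
                (by positivity)
          _ = 1/2 := by field_simp
      have step4 : ∏ j ∈ Finset.range d,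
          (1 - ‖a‖ * ‖q‖ ^ M * ‖q‖ ^ j)
            ≤ ∏ j ∈ Finset.range d, ‖1 - a * q ^ M * q ^ j‖ :=
        Finset.prod_le_prod (fun j _ => by linarith [ht1 j]) step1
      linarith
    calc δ0/2 = δ0 * (1/2) := by ring
      _ ≤ ‖qPoch q a M‖ * ‖qPoch q (a * q ^ M) d‖ :=
        mul_le_mul h1 h2 (by norm_num) (norm_nonneg _)

lemma summable_aux {q z : ℂ} (hq0 : 0 < ‖q‖) (hq1 : ‖q‖ < 1)
    (hz : ‖z‖ < 1) (T : ℕ → ℂ) (C : ℝ)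
    (hT : ∀ n, ‖T n‖ ≤ C * ‖z‖ ^ n)
    {x : ℂ} (hx : ∀ m : ℕ, 1 - x * q ^ m ≠ 0) (k : ℕ) :
    Summable (fun n => T n * qPoch q (q ^ n) k / qPoch q x (n + k)) := by
  obtain ⟨δ, hδpos, hδ⟩ := qPoch_lower hq0 hq1 hx
  have hC : 0 ≤ C := by
    have := hT 0
    have h0 := norm_nonneg (T 0)
    simpa using le_trans h0 this
  set K := C * Real.exp (1 * (1 - ‖q‖)⁻¹) / δ with hK
  apply Summable.of_norm_bounded (g := fun n => K * ‖z‖ ^ n)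
  · exact (summable_geometric_of_lt_one (norm_nonneg _) hz).mul_left K
  · intro n
    rw [norm_div, norm_mul]
    have hb : ‖qPoch q (q ^ n) k‖
        ≤ Real.exp (1 * (1 - ‖q‖)⁻¹) := by
      refine (qPoch_norm_le hq1 (q ^ n) k).trans ?_
      apply Real.exp_le_exp.2
      have h1 : ‖q ^ n‖ ≤ 1 := by
        rw [norm_pow]; exact pow_le_one₀ (norm_nonneg _) hq1.le
      have h2 : (0:ℝ) ≤ (1 - ‖q‖)⁻¹ := by
        have : 0 < 1 - ‖q‖ := by linarith
        positivity
      exact mul_le_mul_of_nonneg_right h1 h2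
    calc ‖T n‖ * ‖qPoch q (q ^ n) k‖ / ‖qPoch q x (n + k)‖
        ≤ (C * ‖z‖ ^ n) * Real.exp (1 * (1 - ‖q‖)⁻¹) / δ := by
          apply div_le_div₀ (by positivity)
            (mul_le_mul (hT n) hb (norm_nonneg _) (by positivity))
            hδpos (hδ (n + k))
      _ = K * ‖z‖ ^ n := by rw [hK]; ring

lemma Dq_iter_tsum {q : ℂ} (hq0 : q ≠ 0) (T : ℕ → ℂ)
    (hsum : ∀ (k : ℕ) (x : ℂ), (∀ m : ℕ, 1 - x * q ^ m ≠ 0) →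
      Summable (fun n => T n * qPoch q (q ^ n) k / qPoch q x (n + k)))
    (k : ℕ) :
    ∀ x : ℂ, x ≠ 0 → (∀ m : ℕ, 1 - x * q ^ m ≠ 0) →
      (Dq q)^[k] (fun t => ∑' n, T n / qPoch q t n) x
        = ∑' n, T n * qPoch q (q ^ n) k / qPoch q x (n + k) := by
  induction k with
  | zero =>
    intro x hx0 hx
    simp [qPoch_zero]
  | succ k ih =>
    intro x hx0 hx
    rw [Function.iterate_succ_apply']
    have hx' : ∀ m : ℕ, 1 - q * x * q ^ m ≠ 0 := by
      intro m
      have := hx (m + 1)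
      rw [pow_succ] at this
      convert this using 2
      ring
    simp only [Dq]
    rw [ih x hx0 hx, ih (q * x) (mul_ne_zero hq0 hx0) hx',
      ← Summable.tsum_sub (hsum k x hx) (hsum k (q * x) hx'), ← tsum_div_const]
    apply tsum_congr
    intro n
    have hA : qPoch q x (n + k) ≠ 0 := qPoch_ne_zero hx _
    have hB : qPoch q (q * x) (n + k) ≠ 0 := qPoch_ne_zero hx' _
    have h1x : (1 : ℂ) - x ≠ 0 := by have := hx 0; simpa using this
    have hfac : (1 : ℂ) - x * q ^ (n + k) ≠ 0 := hx (n + k)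
    have e1 : qPoch q x (n + k + 1) = qPoch q x (n + k) * (1 - x * q ^ (n + k)) :=
      qPoch_succ q x (n + k)
    have e2 : qPoch q x (n + k + 1) = (1 - x) * qPoch q (q * x) (n + k) := by
      rw [qPoch_succ', mul_comm x q]
    have hBval : qPoch q (q * x) (n + k)
        = qPoch q x (n + k) * (1 - x * q ^ (n + k)) / (1 - x) := by
      rw [eq_div_iff h1x]
      linear_combination e1 - e2
    have e3 : qPoch q (q ^ n) (k + 1) = qPoch q (q ^ n) k * (1 - q ^ n * q ^ k) :=
      qPoch_succ q (q ^ n) k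
    have hnk : n + (k + 1) = n + k + 1 := by omega
    rw [hnk, e1, e3, hBval]
    have hqnk : q ^ n * q ^ k = q ^ (n + k) := (pow_add q n k).symm
    field_simp
    rw [← hqnk]
    ring

lemma one_sub_pow_ne {q : ℂ} (hq1 : ‖q‖ < 1) {N : ℕ} (hN : 1 ≤ N) :
    (1 : ℂ) - q ^ N ≠ 0 := by
  intro h
  have h2 : q ^ N = 1 := by linear_combination -h
  have h3 : ‖q ^ N‖ < 1 := by
    rw [norm_pow]
    exact pow_lt_one₀ (norm_nonneg _) hq1 (by omega)
  rw [h2] at h3; simp at h3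

set_option maxHeartbeats 2000000 in
theorem stmt7 (q u z : ℂ) (hq0 : 0 < ‖q‖) (hq1 : ‖q‖ < 1)
    (hu : ‖u‖ ≤ 1) (hz : ‖z‖ < 1)
    (r s : ℕ) (hr : 1 ≤ r) (hs : 0 < s) (hrs : r ≤ s + 1)
    (k : ℕ) (hk : 1 ≤ k)
    (a : Fin r → ℂ) (c : Fin s → ℂ)
    (hc1 : c ⟨0, hs⟩ ≠ 0)
    (hc : ∀ (i : Fin s) (j : ℕ), 1 - c i * q ^ j ≠ 0) :
    (Dq q)^[k] (fun t => dPhi q u z a (Function.update c ⟨0, hs⟩ t)) (c ⟨0, hs⟩) =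
      (-1 : ℂ) ^ (1 + s - r) * (∏ i, (1 - a i)) * qPoch q q k * z /
          (qPoch q (c ⟨0, hs⟩) (k + 1) * (1 - q) *
            ∏ i ∈ Finset.univ.erase (⟨0, hs⟩ : Fin s), (1 - c i)) *
        dPhi q u (q ^ (1 + s - r) * u * z)
          (Fin.snoc (fun i => a i * q) (q ^ (k + 1)))
          (Fin.snoc
            (Function.update (fun i : Fin s => c i * q) ⟨0, hs⟩
              (c ⟨0, hs⟩ * q ^ (k + 1)))
            (q ^ 2)) := by
  set i0 : Fin s := ⟨0, hs⟩ with hi0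
  set x : ℂ := c i0 with hxdef
  set E : ℕ := 1 + s - r with hE
  have hq0' : q ≠ 0 := by
    intro h; rw [h] at hq0; simp at hq0
  have hq1j : ∀ j : ℕ, (1 : ℂ) - q * q ^ j ≠ 0 := by
    intro j
    have h := one_sub_pow_ne hq1 (N := j + 1) (by omega)
    rwa [pow_succ'] at h
  have hqq : ∀ l j : ℕ, (1 : ℂ) - q ^ (l + 1) * q ^ j ≠ 0 := by
    intro l j
    have h := one_sub_pow_ne hq1 (N := l + 1 + j) (by omega)
    rwa [pow_add] at h
  have hxne : ∀ j : ℕ, (1 : ℂ) - x * q ^ j ≠ 0 := hc i0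
  have hxq : ∀ j : ℕ, (1 : ℂ) - x * q ^ (k + 1) * q ^ j ≠ 0 := by
    intro j
    have h := hc i0 (k + 1 + j)
    rwa [pow_add, ← mul_assoc] at h
  have hcq : ∀ (i : Fin s) (j : ℕ), (1 : ℂ) - c i * q * q ^ j ≠ 0 := by
    intro i j
    have h := hc i (j + 1)
    rw [pow_succ'] at h
    rwa [mul_assoc]
  -- definitions
  set R : ℕ → ℂ := fun n => ∏ i ∈ Finset.univ.erase i0, qPoch q (c i) n with hRdef
  set T : ℕ → ℂ := fun n =>
    u ^ n.choose 2 * (∏ i, qPoch q (a i) n) * ((-1) ^ n * q ^ n.choose 2) ^ E * z ^ n /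
      (qPoch q q n * R n) with hTdef
  -- the function equals the abstract series
  have hfun : (fun t => dPhi q u z a (Function.update c i0 t))
      = fun t => ∑' n, T n / qPoch q t n := by
    funext t
    simp only [dPhi]
    apply tsum_congr
    intro n
    have hupd : (∏ i, qPoch q (Function.update c i0 t i) n) = qPoch q t n * R n := by
      have h1 : (fun i => qPoch q (Function.update c i0 t i) n)
          = Function.update (fun i => qPoch q (c i) n) i0 (qPoch q t n) := by
        funext i
        rcases eq_or_ne i i0 with rfl | hne
        · simp
        · simp [Function.update_of_ne hne]
      rw [h1, Finset.prod_update_of_mem (Finset.mem_univ i0), Finset.sdiff_singleton_eq_erase]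
    rw [hupd, hTdef]
    simp only []
    rw [div_eq_mul_inv, div_eq_mul_inv, div_eq_mul_inv, mul_inv, mul_inv]
    ring
  -- bound on T
  obtain ⟨δq, hδqpos, hδq⟩ := qPoch_lower hq0 hq1 hq1j
  have hδc : ∀ i : Fin s, ∃ δ : ℝ, 0 < δ ∧ ∀ n, δ ≤ ‖qPoch q (c i) n‖ :=
    fun i => qPoch_lower hq0 hq1 (hc i)
  choose δc hδcpos hδcle using hδc
  set Ca : ℝ := ∏ i, Real.exp (‖a i‖ * (1 - ‖q‖)⁻¹) with hCa
  set δR : ℝ := ∏ i ∈ Finset.univ.erase i0, δc i with hδR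
  have hδRpos : 0 < δR := Finset.prod_pos (fun i _ => hδcpos i)
  have hCapos : 0 < Ca := Finset.prod_pos (fun i _ => Real.exp_pos _)
  set CT : ℝ := Ca / (δq * δR) with hCT
  have hTb : ∀ n, ‖T n‖ ≤ CT * ‖z‖ ^ n := by
    intro n
    rw [hTdef]
    simp only []
    rw [norm_div]
    have hnum : 
        ‖u ^ n.choose 2 * (∏ i, qPoch q (a i) n) * ((-1) ^ n * q ^ n.choose 2) ^ E * z ^ n‖
        ≤ Ca * ‖z‖ ^ n := by
      rw [norm_mul, norm_mul, norm_mul, norm_pow, norm_pow, norm_pow, norm_mul, norm_pow, norm_pow]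
      have h1 : ‖u‖ ^ n.choose 2 ≤ 1 :=
        pow_le_one₀ (norm_nonneg _) hu
      have h2 : ‖∏ i, qPoch q (a i) n‖ ≤ Ca := by
        rw [norm_prod, hCa]
        exact Finset.prod_le_prod (fun i _ => norm_nonneg _)
          (fun i _ => qPoch_norm_le hq1 (a i) n)
      have h3 : (‖(-1 : ℂ)‖ ^ n * ‖q‖ ^ n.choose 2) ^ E ≤ 1 := by
        apply pow_le_one₀ (by positivity)
        have : ‖(-1 : ℂ)‖ = 1 := by simp
        rw [this, one_pow, one_mul]
        exact pow_le_one₀ (norm_nonneg _) hq1.le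
      calc ‖u‖ ^ n.choose 2 * ‖∏ i, qPoch q (a i) n‖ *
            (‖(-1 : ℂ)‖ ^ n * ‖q‖ ^ n.choose 2) ^ E * ‖z‖ ^ n
          ≤ 1 * Ca * 1 * ‖z‖ ^ n := by
            apply mul_le_mul_of_nonneg_right _ (by positivity)
            apply mul_le_mul _ h3 (by positivity) (by positivity)
            exact mul_le_mul h1 h2 (norm_nonneg _) zero_le_one
        _ = Ca * ‖z‖ ^ n := by ring
    have hden : δq * δR ≤ ‖qPoch q q n * R n‖ := by
      rw [norm_mul]
      apply mul_le_mul (hδq n) _ hδRpos.le (norm_nonneg _)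
      rw [hRdef]
      simp only []
      rw [norm_prod, hδR]
      exact Finset.prod_le_prod (fun i _ => (hδcpos i).le) (fun i _ => hδcle i n)
    calc ‖u ^ n.choose 2 * (∏ i, qPoch q (a i) n) *
            ((-1) ^ n * q ^ n.choose 2) ^ E * z ^ n‖ / ‖qPoch q q n * R n‖
        ≤ (Ca * ‖z‖ ^ n) / (δq * δR) :=
          div_le_div₀ (by positivity) hnum (by positivity) hden
      _ = CT * ‖z‖ ^ n := by rw [hCT]; ring
  have hsum : ∀ (k : ℕ) (y : ℂ), (∀ m : ℕ, 1 - y * q ^ m ≠ 0) →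
      Summable (fun n => T n * qPoch q (q ^ n) k / qPoch q y (n + k)) :=
    fun k y hy => summable_aux hq0 hq1 hz T CT hTb hy k
  rw [hfun, Dq_iter_tsum hq0' T hsum k x hc1 hxne,
    Summable.tsum_eq_zero_add (hsum k x hxne)]
  have h0 : T 0 * qPoch q (q ^ 0) k / qPoch q x (0 + k) = 0 := by
    rw [pow_zero, qPoch_one_eq_zero q hk]
    simp
  rw [h0, zero_add]
  simp only [dPhi]
  rw [← tsum_mul_left]
  apply tsum_congr
  intro m
  have hQm : qPoch q q m ≠ 0 := qPoch_ne_zero hq1j m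
  have hQk : qPoch q q k ≠ 0 := qPoch_ne_zero hq1j k
  have hQmk : qPoch q q (m + k) ≠ 0 := qPoch_ne_zero hq1j _
  have hQ2 : qPoch q (q ^ 2) m ≠ 0 := qPoch_ne_zero (hqq 1) m
  have h1q : (1 : ℂ) - q ≠ 0 := by have := hq1j 0; simpa using this
  have hXk1 : qPoch q x (k + 1) ≠ 0 := qPoch_ne_zero hxne _
  have hXm : qPoch q (x * q ^ (k + 1)) m ≠ 0 := qPoch_ne_zero hxq m
  have hC0 : (∏ i ∈ Finset.univ.erase i0, (1 - c i)) ≠ 0 :=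
    Finset.prod_ne_zero_iff.2 (fun i _ => by have := hc i 0; simpa using this)
  have hRq : (∏ i ∈ Finset.univ.erase i0, qPoch q (c i * q) m) ≠ 0 :=
    Finset.prod_ne_zero_iff.2 (fun i _ => qPoch_ne_zero (hcq i) m)
  have hEE : 1 + (s + 1) - (r + 1) = E := by omega
  have hsnocA : ∏ i : Fin (r + 1), qPoch q ((Fin.snoc (fun i => a i * q) (q ^ (k + 1)) : Fin (r+1) → ℂ) i) m
      = (∏ i, qPoch q (a i * q) m) * qPoch q (q ^ (k + 1)) m := by
    rw [Fin.prod_univ_castSucc]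
    simp
  have hsnocB : ∏ i : Fin (s + 1),
        qPoch q ((Fin.snoc (Function.update (fun i => c i * q) i0 (x * q ^ (k + 1))) (q ^ 2) : Fin (s+1) → ℂ) i) m
      = (qPoch q (x * q ^ (k + 1)) m * ∏ i ∈ Finset.univ.erase i0, qPoch q (c i * q) m) *
          qPoch q (q ^ 2) m := by
    rw [Fin.prod_univ_castSucc]
    simp only [Fin.snoc_castSucc, Fin.snoc_last]
    congr 1
    have h1 : (fun i : Fin s => qPoch q (Function.update (fun i => c i * q) i0 (x * q ^ (k + 1)) i) m)
        = Function.update (fun i : Fin s => qPoch q (c i * q) m) i0 (qPoch q (x * q ^ (k + 1)) m) := by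
      funext i
      rcases eq_or_ne i i0 with rfl | hne
      · simp
      · simp [Function.update_of_ne hne]
    rw [h1, Finset.prod_update_of_mem (Finset.mem_univ i0), Finset.sdiff_singleton_eq_erase]
  have eA : ∏ i, qPoch q (a i) (m + 1) = (∏ i, (1 - a i)) * ∏ i, qPoch q (a i * q) m := by
    rw [← Finset.prod_mul_distrib]
    exact Finset.prod_congr rfl (fun i _ => qPoch_succ' q (a i) m)
  have eC : R (m + 1) = (∏ i ∈ Finset.univ.erase i0, (1 - c i)) *
      ∏ i ∈ Finset.univ.erase i0, qPoch q (c i * q) m := by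
    rw [hRdef]
    simp only []
    rw [← Finset.prod_mul_distrib]
    exact Finset.prod_congr rfl (fun i _ => qPoch_succ' q (c i) m)
  have eQ : qPoch q q (m + 1) = (1 - q) * qPoch q (q ^ 2) m := by
    rw [qPoch_succ', pow_two]
  have hGm : qPoch q q m * qPoch q (q ^ (m + 1)) k = qPoch q q (m + k) := by
    rw [qPoch_add q q m k, pow_succ']
  have hKm : qPoch q q k * qPoch q (q ^ (k + 1)) m = qPoch q q (m + k) := by
    rw [add_comm m k, qPoch_add q q k m, pow_succ']
  have eG : qPoch q (q ^ (m + 1)) k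
      = qPoch q q k * qPoch q (q ^ (k + 1)) m * (qPoch q q m)⁻¹ := by
    rw [hKm, ← hGm, mul_comm (qPoch q q m) (qPoch q (q ^ (m + 1)) k),
      mul_inv_cancel_right₀ hQm]
  have eX : qPoch q x (m + 1 + k) = qPoch q x (k + 1) * qPoch q (x * q ^ (k + 1)) m := by
    have h : m + 1 + k = (k + 1) + m := by omega
    rw [h, qPoch_add]
  have echoose : (m + 1).choose 2 = m.choose 2 + m := by
    have h := Nat.choose_succ_succ m 1
    norm_num at h
    omega
  rw [hTdef]
  simp only []
  rw [echoose, eA, eC, eQ, eG, eX, hEE, hsnocA, hsnocB]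
  have epow1 : (u : ℂ) ^ (m.choose 2 + m) = u ^ m.choose 2 * u ^ m := pow_add u _ m
  have epow2 : ((-1 : ℂ)) ^ (m + 1) = (-1) ^ m * (-1) := pow_succ (-1) m
  have epow3 : (q : ℂ) ^ (m.choose 2 + m) = q ^ m.choose 2 * q ^ m := pow_add q _ m
  have epow4 : ((q : ℂ) ^ E * u * z) ^ m = (q ^ m) ^ E * u ^ m * z ^ m := by
    rw [mul_pow, mul_pow, ← pow_mul, mul_comm E m, pow_mul]
  have epow6 : (z : ℂ) ^ (m + 1) = z ^ m * z := pow_succ z m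
  rw [epow1, epow2, epow3, epow4, epow6]
  have epow5 : (((-1 : ℂ)) ^ m * (-1) * (q ^ m.choose 2 * q ^ m)) ^ E
      = ((-1) ^ m * q ^ m.choose 2) ^ E * ((-1) ^ E * (q ^ m) ^ E) := by
    rw [← mul_pow, ← mul_pow]
    congr 1
    ring
  rw [epow5]
  simp only [div_eq_mul_inv, mul_inv]
  ring
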